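/- arXiv:2110.02688 — 4 statements merged into one kernel-verified Lean document; each statement's English description precedes it below -/
import Mathlib

section
/- Let (X,d) be a finite metric space, let r_1 ≥ r_2 ≥ ... ≥ r_t, and suppose X is covered by sets of centers C_1,...,C_t with |C_i| ≤ k_i, where each point of X lies within distance r_i of some point of C_i for some i. Let L ⊆ X be any set with pairwise distances strictly greater than 2r_t. Then there exist sets C'_1,...,C'_{t-1} ⊆ L with |C'_i| ≤ k_i such that the balls of radius 2r_i around points of C'_i (for i = 1,...,t-1) together cover at least |L| − k_t points of L. -/
open scoped Classical

theorem recenter_cover_all_but_kt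
    {X : Type*} [MetricSpace X] [Fintype X] (t : ℕ)
    (r : Fin (t + 1) → ℝ) (hr0 : ∀ i, 0 ≤ r i) (hmono : Antitone r)
    (k : Fin (t + 1) → ℕ)
    (C : Fin (t + 1) → Finset X) (hCk : ∀ i, (C i).card ≤ k i)
    (hcover : ∀ x : X, ∃ i, ∃ c ∈ C i, dist x c ≤ r i)
    (L : Finset X)
    (hL : ∀ u ∈ L, ∀ v ∈ L, u ≠ v → 2 * r (Fin.last t) < dist u v) :
    ∃ C' : Fin t → Finset X,
      (∀ i, C' i ⊆ L) ∧ (∀ i, (C' i).card ≤ k i.castSucc) ∧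
      L.card - k (Fin.last t) ≤
        (L.filter (fun v => ∃ i : Fin t, ∃ c ∈ C' i,
          dist v c ≤ 2 * r i.castSucc)).card := by
  -- representative in L for a center c at level i
  set rep : Fin t → X → X := fun i c =>
    if h : ∃ v ∈ L, dist v c ≤ r i.castSucc then h.choose else c with hrep
  set C' : Fin t → Finset X := fun i =>
    ((C i.castSucc).filter (fun c => ∃ v ∈ L, dist v c ≤ r i.castSucc)).image (rep i)
    with hC'
  have hsub : ∀ i, C' i ⊆ L := by
    intro i v hv
    simp only [hC', Finset.mem_image, Finset.mem_filter] at hv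
    obtain ⟨c, ⟨hc, hex⟩, hvc⟩ := hv
    simp only [hrep, dif_pos hex] at hvc
    rw [← hvc]
    exact hex.choose_spec.1
  have hcard : ∀ i, (C' i).card ≤ k i.castSucc := by
    intro i
    calc (C' i).card ≤ ((C i.castSucc).filter _).card := Finset.card_image_le
      _ ≤ (C i.castSucc).card := Finset.card_filter_le _ _
      _ ≤ k i.castSucc := hCk _
  -- if u ∈ L is covered at level i < t, it's within 2 r of some rep in C' i
  have hkey : ∀ u ∈ L, ∀ i : Fin t, ∀ c ∈ C i.castSucc,
      dist u c ≤ r i.castSucc → ∃ c' ∈ C' i, dist u c' ≤ 2 * r i.castSucc := by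
    intro u hu i c hc hd
    have hex : ∃ v ∈ L, dist v c ≤ r i.castSucc := ⟨u, hu, hd⟩
    refine ⟨rep i c, ?_, ?_⟩
    · simp only [hC', Finset.mem_image]
      exact ⟨c, Finset.mem_filter.2 ⟨hc, hex⟩, rfl⟩
    · have hrc : dist (rep i c) c ≤ r i.castSucc := by
        simp only [hrep, dif_pos hex]
        exact hex.choose_spec.2
      calc dist u (rep i c) ≤ dist u c + dist c (rep i c) := dist_triangle _ _ _
        _ ≤ r i.castSucc + r i.castSucc := by
            rw [dist_comm c]; exact add_le_add hd hrc
        _ = 2 * r i.castSucc := by ring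
  refine ⟨C', hsub, hcard, ?_⟩
  set S := L.filter (fun v => ∃ i : Fin t, ∃ c ∈ C' i, dist v c ≤ 2 * r i.castSucc) with hS
  set U := L \ S with hU
  -- each uncovered point has a center in C (last t) within r (last t)
  have hUc : ∀ u ∈ U, ∃ c ∈ C (Fin.last t), dist u c ≤ r (Fin.last t) := by
    intro u hu
    have huL : u ∈ L := (Finset.mem_sdiff.1 hu).1
    have huS : u ∉ S := (Finset.mem_sdiff.1 hu).2
    obtain ⟨i, c, hc, hd⟩ := hcover u
    by_cases hi : i = Fin.last t
    · exact ⟨c, hi ▸ hc, hi ▸ hd⟩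
    · obtain ⟨j, rfl⟩ := Fin.exists_castSucc_eq.2 hi
      obtain ⟨c', hc', hd'⟩ := hkey u huL j c hc hd
      exact absurd (Finset.mem_filter.2 ⟨huL, j, c', hc', hd'⟩) huS
  set g : X → X := fun u =>
    if h : ∃ c ∈ C (Fin.last t), dist u c ≤ r (Fin.last t) then h.choose else u with hg
  have hUcard : U.card ≤ (C (Fin.last t)).card := by
    apply Finset.card_le_card_of_injOn g
    · intro u hu
      have h := hUc u hu
      simp only [hg, dif_pos h]
      exact h.choose_spec.1
    · intro u hu v hv huv
      by_contra hne
      have hu' := hUc u hu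
      have hv' := hUc v hv
      have huL : u ∈ L := (Finset.mem_sdiff.1 hu).1
      have hvL : v ∈ L := (Finset.mem_sdiff.1 hv).1
      have h1 : dist u (g u) ≤ r (Fin.last t) := by
        simp only [hg, dif_pos hu']; exact hu'.choose_spec.2
      have h2 : dist v (g v) ≤ r (Fin.last t) := by
        simp only [hg, dif_pos hv']; exact hv'.choose_spec.2
      have : dist u v ≤ 2 * r (Fin.last t) := by
        calc dist u v ≤ dist u (g u) + dist (g u) v := dist_triangle _ _ _
          _ = dist u (g u) + dist v (g v) := by rw [huv, dist_comm (g v) v]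
          _ ≤ r (Fin.last t) + r (Fin.last t) := add_le_add h1 h2
          _ = 2 * r (Fin.last t) := by ring
      exact absurd this (not_le.2 (hL u huL v hvL hne))
  have hsplit : L.card = S.card + U.card := by
    have h1 : S ⊆ L := Finset.filter_subset _ _
    have h2 := Finset.card_le_card h1
    rw [hU, Finset.card_sdiff_of_subset h1]
    omega
  have : L.card ≤ S.card + k (Fin.last t) := by
    rw [hsplit]
    exact Nat.add_le_add_left (hUcard.trans (hCk _)) _
  omega
end

section
/- Let (X,d) be a finite metric space partitioned into clusters {Child(v)}_{v∈L} with v ∈ Child(v) and Child(v) ⊆ B(v, 2r_t). Suppose there exist centers C'_i ⊆ L, |C'_i| ≤ k_i (for i = 1,...,t−1), such that balls of radius ρ_i around C'_i cover all but at most k_t points of L. Then X can be covered using at most k_i balls of radius ρ_i + 2r_t (for i = 1,...,t−1) centered at points of C'_i, together with at most k_t balls of radius 2r_t centered at the uncovered points of L. -/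
theorem lift_robust_solution_to_full_cover
    {X : Type*} [MetricSpace X] [Fintype X] (n : ℕ)
    (rt : ℝ) (hrt : 0 ≤ rt) (ρ : Fin n → ℝ) (hρ : ∀ i, 0 ≤ ρ i)
    (k : Fin n → ℕ) (kt : ℕ)
    (L : Finset X) (Child : X → Set X)
    (hChildMem : ∀ v ∈ L, v ∈ Child v)
    (hChildBall : ∀ v ∈ L, Child v ⊆ Metric.closedBall v (2 * rt))
    (hPartition : ∀ x : X, ∃! v, v ∈ L ∧ x ∈ Child v)
    (C' : Fin n → Finset X)
    (hC'L : ∀ i, C' i ⊆ L) (hC'k : ∀ i, (C' i).card ≤ k i)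
    (hUncov : {v ∈ (L : Set X) |
        ¬ ∃ i, ∃ c ∈ C' i, dist v c ≤ ρ i}.ncard ≤ kt) :
    ∀ x : X,
      (∃ i, ∃ c ∈ C' i, dist x c ≤ ρ i + 2 * rt) ∨
      (∃ v ∈ L, (¬ ∃ i, ∃ c ∈ C' i, dist v c ≤ ρ i) ∧
        dist x v ≤ 2 * rt) := by
  intro x
  obtain ⟨v, ⟨hvL, hxv⟩, _⟩ := hPartition x
  have hd : dist x v ≤ 2 * rt := hChildBall v hvL hxv
  by_cases h : ∃ i, ∃ c ∈ C' i, dist v c ≤ ρ i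
  · obtain ⟨i, c, hc, hdc⟩ := h
    exact Or.inl ⟨i, c, hc, (dist_triangle x v c).trans (by linarith)⟩
  · exact Or.inr ⟨v, hvL, h, hd⟩
end

section
/- Contraction feasibility: let (X,d) be a finite metric space, L ⊆ X with pairwise distances strictly greater than 2r_2, and w : L → ℕ. Suppose there exist C_1, C_2 ⊆ X with |C_i| ≤ k_i such that ∑_{v∈L, v covered} w(v) ≥ m, where v is covered if v ∈ B(c, r_1) for some c ∈ C_1 or v ∈ B(c, r_2) for some c ∈ C_2 (with r_1 ≥ r_2). Then there exist C'_1, C'_2 ⊆ L with |C'_i| ≤ k_i such that ∑_{v∈L, v covered'} w(v) ≥ m, where v is covered' if v ∈ B(c, 2r_1) for some c ∈ C'_1 or v ∈ C'_2. -/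
open scoped Classical

theorem contraction_feasibility
    {X : Type*} [MetricSpace X] [Fintype X]
    (r₁ r₂ : ℝ) (hr₂ : 0 ≤ r₂) (hr : r₂ ≤ r₁)
    (k₁ k₂ m : ℕ) (L : Finset X)
    (hL : ∀ u ∈ L, ∀ v ∈ L, u ≠ v → 2 * r₂ < dist u v)
    (w : X → ℕ)
    (C₁ C₂ : Finset X) (hC₁ : C₁.card ≤ k₁) (hC₂ : C₂.card ≤ k₂)
    (hcov : (m : ℕ) ≤ ∑ v ∈ L, if (∃ c ∈ C₁, dist v c ≤ r₁) ∨
        (∃ c ∈ C₂, dist v c ≤ r₂) then w v else 0) :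
    ∃ C₁' C₂' : Finset X, C₁' ⊆ L ∧ C₂' ⊆ L ∧
      C₁'.card ≤ k₁ ∧ C₂'.card ≤ k₂ ∧
      m ≤ ∑ v ∈ L, if (∃ c ∈ C₁', dist v c ≤ 2 * r₁) ∨ v ∈ C₂'
        then w v else 0 := by
  set g₁ : X → X := fun c => if h : ∃ v ∈ L, dist v c ≤ r₁ then h.choose else c with hg₁
  set g₂ : X → X := fun c => if h : ∃ v ∈ L, dist v c ≤ r₂ then h.choose else c with hg₂
  refine ⟨(C₁.filter (fun c => ∃ v ∈ L, dist v c ≤ r₁)).image g₁,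
          (C₂.filter (fun c => ∃ v ∈ L, dist v c ≤ r₂)).image g₂, ?_, ?_, ?_, ?_, ?_⟩
  · intro x hx
    simp only [Finset.mem_image, Finset.mem_filter] at hx
    obtain ⟨c, ⟨_, h⟩, rfl⟩ := hx
    simp only [hg₁, dif_pos h]
    exact h.choose_spec.1
  · intro x hx
    simp only [Finset.mem_image, Finset.mem_filter] at hx
    obtain ⟨c, ⟨_, h⟩, rfl⟩ := hx
    simp only [hg₂, dif_pos h]
    exact h.choose_spec.1
  · exact le_trans (le_trans (Finset.card_image_le) (Finset.card_filter_le _ _)) hC₁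
  · exact le_trans (le_trans (Finset.card_image_le) (Finset.card_filter_le _ _)) hC₂
  · refine le_trans hcov (Finset.sum_le_sum fun v hv => ?_)
    split_ifs with h1 h2 h2
    · exact le_refl _
    · exfalso; apply h2
      rcases h1 with ⟨c, hc, hd⟩ | ⟨c, hc, hd⟩
      · left
        have hex : ∃ u ∈ L, dist u c ≤ r₁ := ⟨v, hv, hd⟩
        refine ⟨g₁ c, Finset.mem_image_of_mem _ (Finset.mem_filter.2 ⟨hc, hex⟩), ?_⟩
        have := hex.choose_spec.2
        simp only [hg₁, dif_pos hex]
        calc dist v hex.choose ≤ dist v c + dist c hex.choose := dist_triangle _ _ _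
          _ ≤ r₁ + r₁ := by rw [dist_comm c]; exact add_le_add hd this
          _ = 2 * r₁ := by ring
      · right
        have hex : ∃ u ∈ L, dist u c ≤ r₂ := ⟨v, hv, hd⟩
        have hmem : g₂ c ∈ (C₂.filter (fun c => ∃ v ∈ L, dist v c ≤ r₂)).image g₂ :=
          Finset.mem_image_of_mem _ (Finset.mem_filter.2 ⟨hc, hex⟩)
        have hu := hex.choose_spec
        have hvu : v = hex.choose := by
          by_contra hne
          have := hL v hv hex.choose hu.1 hne
          have : dist v hex.choose ≤ 2 * r₂ := by
            calc dist v hex.choose ≤ dist v c + dist c hex.choose := dist_triangle _ _ _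
              _ ≤ r₂ + r₂ := by rw [dist_comm c]; exact add_le_add hd hu.2
              _ = 2 * r₂ := by ring
          linarith [hL v hv hex.choose hu.1 hne]
        have : g₂ c = v := by simp only [hg₂, dif_pos hex]; exact hvu.symm
        rwa [this] at hmem
    · exact Nat.zero_le _
    · exact le_refl _
end

section
/- Two-radii re-centering with exact budget accounting: let (X,d) be a finite metric space, r_1 ≥ r_2 ≥ 0, and L ⊆ X with pairwise distances strictly greater than 2r_2. Given centers C_1, C_2 ⊆ X with |C_1| ≤ k_1, |C_2| ≤ k_2 such that every point of L lies in B(c, r_1) for some c ∈ C_1 or in B(c, r_2) for some c ∈ C_2, the set of points of L covered only via C_2 has cardinality at most k_2, and all remaining points of L can be covered by at most k_1 balls of radius 2r_1 centered at points of L. -/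
theorem two_radii_recentering
    {X : Type*} [MetricSpace X] [Fintype X]
    (r₁ r₂ : ℝ) (hr₂ : 0 ≤ r₂) (hr : r₂ ≤ r₁)
    (k₁ k₂ : ℕ) (L : Finset X)
    (hL : ∀ u ∈ L, ∀ v ∈ L, u ≠ v → 2 * r₂ < dist u v)
    (C₁ C₂ : Finset X) (hC₁ : C₁.card ≤ k₁) (hC₂ : C₂.card ≤ k₂)
    (hcover : ∀ v ∈ L, (∃ c ∈ C₁, dist v c ≤ r₁) ∨ (∃ c ∈ C₂, dist v c ≤ r₂)) :
    {v ∈ (L : Set X) | (∃ c ∈ C₂, dist v c ≤ r₂) ∧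
      ∀ c ∈ C₁, r₁ < dist v c}.ncard ≤ k₂ ∧
    ∃ D : Finset X, D ⊆ L ∧ D.card ≤ k₁ ∧
      ∀ v ∈ L, (∃ c ∈ C₁, dist v c ≤ r₁) → ∃ d ∈ D, dist v d ≤ 2 * r₁ := by
  classical
  constructor
  · set g : X → X := fun v =>
      if h : ∃ c ∈ C₂, dist v c ≤ r₂ then h.choose else v with hg
    have hmaps : ∀ v ∈ {v ∈ (L : Set X) | (∃ c ∈ C₂, dist v c ≤ r₂) ∧
        ∀ c ∈ C₁, r₁ < dist v c}, g v ∈ (C₂ : Set X) := by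
      rintro v ⟨hvL, h, _⟩
      simp only [hg, dif_pos h]
      exact h.choose_spec.1
    have hinj : Set.InjOn g {v ∈ (L : Set X) | (∃ c ∈ C₂, dist v c ≤ r₂) ∧
        ∀ c ∈ C₁, r₁ < dist v c} := by
      rintro u ⟨huL, hu, _⟩ v ⟨hvL, hv, _⟩ heq
      by_contra hne
      have h1 : dist u (g u) ≤ r₂ := by
        simp only [hg, dif_pos hu]; exact hu.choose_spec.2
      have h2 : dist v (g v) ≤ r₂ := by
        simp only [hg, dif_pos hv]; exact hv.choose_spec.2
      have := hL u huL v hvL hne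
      have : dist u v ≤ 2 * r₂ := by
        calc dist u v ≤ dist u (g u) + dist (g u) v := dist_triangle _ _ _
        _ = dist u (g u) + dist v (g v) := by rw [heq, dist_comm (g v) v]
        _ ≤ 2 * r₂ := by linarith
      linarith
    calc _ ≤ (C₂ : Set X).ncard :=
        Set.ncard_le_ncard_of_injOn g hmaps hinj (C₂.finite_toSet)
      _ ≤ k₂ := by rw [Set.ncard_coe_finset]; exact hC₂
  · set f : X → X := fun c =>
      if h : ∃ v ∈ L, dist v c ≤ r₁ then h.choose else c with hf
    refine ⟨(C₁.filter (fun c => ∃ v ∈ L, dist v c ≤ r₁)).image f, ?_, ?_, ?_⟩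
    · intro x hx
      obtain ⟨c, hc, rfl⟩ := Finset.mem_image.mp hx
      have h : ∃ v ∈ L, dist v c ≤ r₁ := (Finset.mem_filter.mp hc).2
      simp only [hf, dif_pos h]
      exact h.choose_spec.1
    · calc _ ≤ (C₁.filter _).card := Finset.card_image_le
        _ ≤ C₁.card := Finset.card_filter_le _ _
        _ ≤ k₁ := hC₁
    · rintro v hv ⟨c, hc, hd⟩
      have h : ∃ v ∈ L, dist v c ≤ r₁ := ⟨v, hv, hd⟩
      refine ⟨f c, Finset.mem_image_of_mem f (Finset.mem_filter.mpr ⟨hc, h⟩), ?_⟩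
      have : f c = h.choose := by simp only [hf, dif_pos h]
      rw [this]
      calc dist v h.choose ≤ dist v c + dist c h.choose := dist_triangle _ _ _
        _ ≤ r₁ + r₁ := by
          have := h.choose_spec.2
          rw [dist_comm c h.choose]; linarith
        _ = 2 * r₁ := by ring
end
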